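/- The circle S¹ does not admit a 2-mean: there is no continuous map r : S¹ × S¹ → S¹ such that r(x,y) = r(y,x) for all x,y ∈ S¹ and r(x,x) = x for all x ∈ S¹. -/

import Mathlib

open Real Set Metric Finset Complex

noncomputable section

namespace AumannNoTwoMean

/-- A continuous real function on a preconnected set taking values in `(2π)ℤ` is constant. -/
lemma const_of_int_valued {X : Type*} [TopologicalSpace X] {s : Set X}
    (hs : IsPreconnected s) {f : X → ℝ} (hf : ContinuousOn f s)
    (hint : ∀ x ∈ s, ∃ m : ℤ, f x = m * (2 * π)) {a b : X} (ha : a ∈ s) (hb : b ∈ s) :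
    f a = f b := by
  have hπ : (0:ℝ) < π := Real.pi_pos
  have key : ∀ u v : X, u ∈ s → v ∈ s → f u < f v → False := by
    intro u v hu hv hlt
    obtain ⟨mu, hmu⟩ := hint u hu
    obtain ⟨mv, hmv⟩ := hint v hv
    have hmulv : (mu:ℝ) < mv := by
      rw [hmu, hmv] at hlt
      have h2 : (0:ℝ) < 2*π := by linarith
      exact lt_of_mul_lt_mul_right hlt h2.le
    have hmuv' : (mu:ℝ) + 1 ≤ mv := by exact_mod_cast (by exact_mod_cast hmulv : mu < mv)
    have hval : (mu:ℝ)*(2*π) + π ∈ Icc (f u) (f v) := by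
      constructor
      · rw [hmu]; linarith
      · rw [hmv]; nlinarith
    obtain ⟨x, hx, hfx⟩ := hs.intermediate_value hu hv hf hval
    obtain ⟨m, hm⟩ := hint x hx
    rw [hm] at hfx
    have h2 : ((2*(m - mu) - 1 : ℤ) : ℝ) * π = 0 := by push_cast; linarith
    have h3 : (2*(m - mu) - 1 : ℤ) = 0 := by
      have := (mul_eq_zero.mp h2).resolve_right hπ.ne'
      exact_mod_cast this
    omega
  rcases lt_trichotomy (f a) (f b) with h | h | h
  · exact absurd h (fun h => key a b ha hb h)
  · exact h
  · exact absurd h (fun h => key b a hb ha h)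

lemma re_div_pos {z w : Circle} (h : dist z w < 1) :
    (0:ℝ) < ((z / w : Circle) : ℂ).re := by
  have hd : dist (z:ℂ) (w:ℂ) < 1 := h
  rw [Complex.dist_eq] at hd
  have h2 : Complex.normSq ((z:ℂ) - w) < 1 := by
    rw [← Complex.sq_norm]
    nlinarith [norm_nonneg ((z:ℂ) - w)]
  have h3 : Complex.normSq ((z:ℂ) - w) = 2 - 2*((z:ℂ) * (starRingEnd ℂ) (w:ℂ)).re := by
    rw [Complex.normSq_sub]; simp; norm_num
  have h4 : ((z / w : Circle) : ℂ) = (z:ℂ) * (starRingEnd ℂ) (w:ℂ) := by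
    rw [Circle.coe_div, div_eq_mul_inv, ← Circle.coe_inv, Circle.coe_inv_eq_conj]
  rw [h4]
  linarith

lemma exp_sum (s : Finset ℕ) (f : ℕ → ℝ) :
    Circle.exp (∑ i ∈ s, f i) = ∏ i ∈ s, Circle.exp (f i) := by
  classical
  induction s using Finset.induction_on with
  | empty => simpa using Circle.exp_zero
  | insert _ _ h ih => rw [Finset.sum_insert h, Finset.prod_insert h, Circle.exp_add, ih]

/-- Existence of a continuous lift of a circle-valued map on a closed ball. -/
lemma exists_lift (G : ℝ × ℝ → Circle) (hG : Continuous G) (R : ℝ) (hR : 0 < R) :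
    ∃ F : ℝ × ℝ → ℝ, ContinuousOn F (closedBall 0 R) ∧
      ∀ p ∈ closedBall (0:ℝ×ℝ) R, Circle.exp (F p) = G p := by
  set K := closedBall (0:ℝ×ℝ) R with hKdef
  have hK : IsCompact K := isCompact_closedBall _ _
  have hUC := hK.uniformContinuousOn_of_continuous hG.continuousOn
  replace hUC := Metric.uniformContinuousOn_iff.1 hUC
  obtain ⟨δ, hδ0, hδ⟩ := hUC 1 one_pos
  obtain ⟨N, hN⟩ := exists_nat_gt (R / δ)
  have hN0 : (0:ℝ) < (N:ℝ) := lt_of_le_of_lt (div_nonneg hR.le hδ0.le) hN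
  have hmem : ∀ p ∈ K, ∀ c : ℝ, 0 ≤ c → c ≤ 1 → c • p ∈ K := by
    intro p hp c hc0 hc1
    rw [hKdef, mem_closedBall_zero_iff] at hp ⊢
    rw [norm_smul]
    calc ‖c‖ * ‖p‖ ≤ 1 * ‖p‖ := by
          apply mul_le_mul_of_nonneg_right _ (norm_nonneg _)
          rwa [Real.norm_eq_abs, _root_.abs_of_nonneg hc0]
      _ = ‖p‖ := one_mul _
      _ ≤ R := hp
  have hfrac : ∀ k : ℕ, k ≤ N → ((k:ℝ)/N ≥ 0 ∧ (k:ℝ)/N ≤ 1) := by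
    intro k hk
    constructor
    · positivity
    · rw [div_le_one hN0]; exact_mod_cast hk
  have hclose : ∀ p ∈ K, ∀ k : ℕ, k < N →
      dist (G ((((k+1:ℕ):ℝ)/N) • p)) (G ((((k:ℕ):ℝ)/N) • p)) < 1 := by
    intro p hp k hk
    have hk1 := hfrac (k+1) hk
    have hk2 := hfrac k hk.le
    apply hδ _ (hmem p hp _ hk1.1 hk1.2) _ (hmem p hp _ hk2.1 hk2.2)
    rw [dist_eq_norm, ← sub_smul]
    have he : ((k+1:ℕ):ℝ)/N - ((k:ℕ):ℝ)/N = 1/N := by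
      push_cast
      field_simp
      ring
    rw [he, norm_smul]
    have hpn : ‖p‖ ≤ R := mem_closedBall_zero_iff.1 hp
    have h1 : ‖(1/(N:ℝ))‖ = 1/(N:ℝ) := by
      rw [Real.norm_eq_abs, abs_of_pos (by positivity)]
    rw [h1]
    have hRN : R / (N:ℝ) < δ := by
      rw [div_lt_iff₀ hN0]
      rw [div_lt_iff₀ hδ0] at hN
      linarith [hN]
    calc (1/(N:ℝ)) * ‖p‖ ≤ (1/(N:ℝ)) * R := by
          apply mul_le_mul_of_nonneg_left hpn (by positivity)
      _ = R / N := by ring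
      _ < δ := hRN
  refine ⟨fun p => Complex.arg (G 0) + ∑ k ∈ Finset.range N,
      Complex.arg ((G ((((k+1:ℕ):ℝ)/N) • p) / G ((((k:ℕ):ℝ)/N) • p) : Circle) : ℂ), ?_, ?_⟩
  · apply ContinuousOn.add continuousOn_const
    apply continuousOn_finset_sum
    intro k hk
    have hdivc : Continuous fun p : ℝ×ℝ =>
        (G ((((k+1:ℕ):ℝ)/N) • p) / G ((((k:ℕ):ℝ)/N) • p) : Circle) :=
      (hG.comp (f := fun p : ℝ×ℝ => (((k+1:ℕ):ℝ)/N) • p) (by fun_prop)).div'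
        (hG.comp (f := fun p : ℝ×ℝ => (((k:ℕ):ℝ)/N) • p) (by fun_prop))
    have hcc : Continuous fun p : ℝ×ℝ =>
        ((G ((((k+1:ℕ):ℝ)/N) • p) / G ((((k:ℕ):ℝ)/N) • p) : Circle) : ℂ) :=
      continuous_induced_dom.comp hdivc
    intro p hp
    have harg : ContinuousAt Complex.arg
        ((G ((((k+1:ℕ):ℝ)/N) • p) / G ((((k:ℕ):ℝ)/N) • p) : Circle) : ℂ) := by
      apply Complex.continuousAt_arg
      exact Or.inl (re_div_pos (hclose p hp k (Finset.mem_range.mp hk)))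
    exact (ContinuousAt.comp (f := fun q : ℝ×ℝ =>
      ((G ((((k+1:ℕ):ℝ)/N) • q) / G ((((k:ℕ):ℝ)/N) • q) : Circle) : ℂ))
      harg hcc.continuousAt).continuousWithinAt
  · intro p hp
    rw [Circle.exp_add, exp_sum, Circle.exp_arg]
    have hterm : ∀ k ∈ Finset.range N,
        Circle.exp (Complex.arg ((G ((((k+1:ℕ):ℝ)/N) • p) / G ((((k:ℕ):ℝ)/N) • p) : Circle) : ℂ))
        = G ((((k+1:ℕ):ℝ)/N) • p) / G ((((k:ℕ):ℝ)/N) • p) := by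
      intro k _
      exact Circle.exp_arg _
    rw [Finset.prod_congr rfl hterm,
      Finset.prod_range_div (fun k => G ((((k:ℕ):ℝ)/N) • p)) N]
    have h0 : (((0:ℕ):ℝ)/N) • p = (0:ℝ×ℝ) := by
      norm_num
    have hNN : (((N:ℕ):ℝ)/N) • p = p := by
      rw [div_self hN0.ne', one_smul]
    rw [h0, hNN]
    exact mul_div_cancel (G 0) (G p)

end AumannNoTwoMean

end

open Real Set Metric AumannNoTwoMean in
/-- Aumann's theorem: the circle `S¹` does not admit a 2-mean, i.e. there is no
continuous map `r : S¹ × S¹ → S¹` which is symmetric and restricts to the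
identity on the diagonal. -/
theorem circle_has_no_two_mean :
    ¬ ∃ r : Circle × Circle → Circle,
      Continuous r ∧ (∀ x y : Circle, r (x, y) = r (y, x)) ∧
      (∀ x : Circle, r (x, x) = x) := by
  rintro ⟨r, hcont, hsymm, hdiag⟩
  have hπ : (0:ℝ) < π := Real.pi_pos
  set G : ℝ × ℝ → Circle := fun p => r (Circle.exp p.1, Circle.exp p.2) with hGdef
  have hGcont : Continuous G := by
    apply hcont.comp
    exact (Circle.exp.continuous.comp continuous_fst).prodMk
      (Circle.exp.continuous.comp continuous_snd)
  obtain ⟨F, hFc, hF⟩ := exists_lift G hGcont (2*π) (by positivity)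
  set K := closedBall (0:ℝ×ℝ) (2*π) with hKdef
  have hmem : ∀ s t : ℝ, s ∈ Icc 0 (2*π) → t ∈ Icc 0 (2*π) → ((s,t) : ℝ×ℝ) ∈ K := by
    intro s t hs ht
    rw [hKdef, mem_closedBall_zero_iff, Prod.norm_def]
    apply max_le
    · rw [Real.norm_eq_abs]; exact abs_le.mpr ⟨by linarith [hs.1], hs.2⟩
    · rw [Real.norm_eq_abs]; exact abs_le.mpr ⟨by linarith [ht.1], ht.2⟩
  have h2πI : (2*π) ∈ Icc (0:ℝ) (2*π) := ⟨by linarith, le_refl _⟩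
  have h0I : (0:ℝ) ∈ Icc (0:ℝ) (2*π) := ⟨le_refl _, by linarith⟩
  have h00 := hmem 0 0 h0I h0I
  have h20 := hmem (2*π) 0 h2πI h0I
  have h02 := hmem 0 (2*π) h0I h2πI
  have h22 := hmem (2*π) (2*π) h2πI h2πI
  -- G is 2π-periodic in the first variable at 2π:
  have hGper : ∀ t : ℝ, G (2*π, t) = G (0, t) := by
    intro t
    simp only [hGdef]
    rw [Circle.exp_two_pi, Circle.exp_zero]
  -- (1) t ↦ F(2π,t) - F(0,t) is constant on [0,2π]
  have step1 : F (2*π, 2*π) - F (0, 2*π) = F (2*π, 0) - F (0, 0) := by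
    have := const_of_int_valued (f := fun t : ℝ => F (2*π, t) - F (0, t))
      (s := Icc (0:ℝ) (2*π)) isPreconnected_Icc
      (by
        apply ContinuousOn.sub
        · exact hFc.comp (Continuous.continuousOn (by fun_prop))
            (fun t ht => hmem _ _ h2πI ht)
        · exact hFc.comp (Continuous.continuousOn (by fun_prop))
            (fun t ht => hmem _ _ h0I ht))
      (by
        intro t ht
        have he : Circle.exp (F (2*π, t)) = Circle.exp (F (0, t)) := by
          rw [hF _ (hmem _ _ h2πI ht), hF _ (hmem _ _ h0I ht)]
          exact hGper t
        obtain ⟨m, hm⟩ := Circle.exp_eq_exp.mp he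
        refine ⟨m, ?_⟩
        show F (2*π, t) - F (0, t) = (m:ℝ) * (2*π)
        linarith)
      h2πI h0I
    simpa using this
  -- (3) symmetry: F(2π,0) = F(0,2π)
  have hswapK : ∀ p : ℝ×ℝ, p ∈ K → ((p.2, p.1) : ℝ×ℝ) ∈ K := by
    intro p hp
    rw [hKdef, mem_closedBall_zero_iff, Prod.norm_def] at hp ⊢
    rw [max_comm]; exact hp
  have step3 : F (2*π, 0) = F (0, 2*π) := by
    have := const_of_int_valued (f := fun p : ℝ×ℝ => F p - F (p.2, p.1))
      (s := K) ((convex_closedBall _ _).isPreconnected)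
      (by
        apply ContinuousOn.sub hFc
        exact hFc.comp (Continuous.continuousOn (by fun_prop)) hswapK)
      (by
        intro p hp
        have he : Circle.exp (F p) = Circle.exp (F (p.2, p.1)) := by
          rw [hF _ hp, hF _ (hswapK p hp)]
          simp only [hGdef]
          exact hsymm _ _
        obtain ⟨m, hm⟩ := Circle.exp_eq_exp.mp he
        refine ⟨m, ?_⟩
        show F p - F (p.2, p.1) = (m:ℝ) * (2*π)
        linarith)
      h20 h00
    simp only at this
    linarith [this]
  -- (4) diagonal: F(2π,2π) = F(0,0) + 2π
  have step4 : F (2*π, 2*π) = F (0, 0) + 2*π := by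
    have := const_of_int_valued (f := fun s : ℝ => F (s, s) - s)
      (s := Icc (0:ℝ) (2*π)) isPreconnected_Icc
      (by
        apply ContinuousOn.sub _ continuous_id.continuousOn
        exact hFc.comp (Continuous.continuousOn (by fun_prop))
          (fun s hs => hmem _ _ hs hs))
      (by
        intro s hs
        have he : Circle.exp (F (s, s)) = Circle.exp s := by
          rw [hF _ (hmem _ _ hs hs)]
          simp only [hGdef]
          exact hdiag _
        obtain ⟨m, hm⟩ := Circle.exp_eq_exp.mp he
        refine ⟨m, ?_⟩
        show F (s, s) - s = (m:ℝ) * (2*π)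
        linarith)
      h2πI h0I
    linarith [this]
  -- (5) F(2π,0) - F(0,0) is a multiple of 2π
  obtain ⟨m, hm⟩ : ∃ m : ℤ, F (2*π, 0) = F (0, 0) + m * (2*π) := by
    apply Circle.exp_eq_exp.mp
    rw [hF _ h20, hF _ h00]
    exact hGper 0
  -- combine
  have hfinal : π = m * (2*π) := by
    have h1 : F (2*π, 2*π) - F (0, 2*π) = F (2*π, 0) - F (0, 0) := step1
    rw [← step3] at h1
    -- F(2π,2π) - F(2π,0) = F(2π,0) - F(0,0)
    -- and F(2π,2π) = F(0,0) + 2π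
    linarith [step4, hm]
  have h2 : ((2*m - 1 : ℤ):ℝ) * π = 0 := by push_cast; linarith
  have h3 : (2*m - 1 : ℤ) = 0 := by
    have := (mul_eq_zero.mp h2).resolve_right hπ.ne'
    exact_mod_cast this
  omega
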